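/- Let N ≥ 1 be a natural number, q_1, …, q_N ∈ (0,1) reals, and D ≥ 0 a real. Suppose x* : {1,…,N} → ℝ satisfies x*_n ≥ 0 for all n, ∑_{n=1}^{N} x*_n = D, and there exists a real γ such that −(log q_n) · q_n^{x*_n+1} / (1 − q_n^{x*_n+1}) = γ for every n. Then for every x : {1,…,N} → ℝ with x_n ≥ 0 for all n and ∑_{n=1}^{N} x_n = D, one has ∏_{n=1}^{N} (1 − q_n^{x_n+1}) ≤ ∏_{n=1}^{N} (1 − q_n^{x*_n+1}). -/

import Mathlib

lemma key_log_ineq (u v : ℝ) (hu : u ∈ Set.Ioo (0:ℝ) 1) (hv : v ∈ Set.Ioo (0:ℝ) 1) :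
    Real.log (1-u) ≤ Real.log (1-v) + v/(1-v) * Real.log (v/u) := by
  obtain ⟨hu0, hu1⟩ := hu
  obtain ⟨hv0, hv1⟩ := hv
  have h1v : (0:ℝ) < 1 - v := by linarith
  have h1u : (0:ℝ) < 1 - u := by linarith
  have A : Real.log (1-u) - Real.log (1-v) ≤ (1-u)/(1-v) - 1 := by
    rw [← Real.log_div (by linarith) (by linarith)]
    exact Real.log_le_sub_one_of_pos (by positivity)
  have B : 1 - u/v ≤ Real.log (v/u) := by
    have h2 := Real.log_le_sub_one_of_pos (show 0 < u/v by positivity)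
    have hlog : Real.log (u/v) = - Real.log (v/u) := by
      rw [← Real.log_inv]
      congr 1
      field_simp
    linarith
  have C : (v-u)/(1-v) ≤ v/(1-v) * Real.log (v/u) := by
    have hv' : 0 ≤ v/(1-v) := by positivity
    have h3 : v/(1-v) * (1 - u/v) ≤ v/(1-v) * Real.log (v/u) :=
      mul_le_mul_of_nonneg_left B hv'
    have heq : v/(1-v) * (1 - u/v) = (v-u)/(1-v) := by
      field_simp
    linarith
  have hD : (1-u)/(1-v) - 1 = (v-u)/(1-v) := by field_simp; ring
  linarith

/-- General case of Proposition 5: any allocation satisfying the KKT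
stationarity condition is a global maximizer of the success-probability
lower bound `∏ (1 - q_n^{x_n+1})` subject to the budget constraint. -/
theorem stmt_13 (N : ℕ) (hN : 1 ≤ N) (q : Fin N → ℝ)
    (hq : ∀ n, q n ∈ Set.Ioo (0:ℝ) 1) (D : ℝ) (hD : 0 ≤ D)
    (xstar : Fin N → ℝ) (hxstar : ∀ n, 0 ≤ xstar n)
    (hsumstar : ∑ n, xstar n = D)
    (hKKT : ∃ γ : ℝ, ∀ n,
      -(Real.log (q n)) * (q n) ^ (xstar n + 1) / (1 - (q n) ^ (xstar n + 1)) = γ)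
    (x : Fin N → ℝ) (hx : ∀ n, 0 ≤ x n) (hsum : ∑ n, x n = D) :
    ∏ n, (1 - (q n) ^ (x n + 1)) ≤ ∏ n, (1 - (q n) ^ (xstar n + 1)) := by
  obtain ⟨γ, hγ⟩ := hKKT
  set u : Fin N → ℝ := fun n => q n ^ (x n + 1) with hu_def
  set v : Fin N → ℝ := fun n => q n ^ (xstar n + 1) with hv_def
  have hu : ∀ n, u n ∈ Set.Ioo (0:ℝ) 1 := by
    intro n
    obtain ⟨h0, h1⟩ := hq n
    exact ⟨Real.rpow_pos_of_pos h0 _,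
      Real.rpow_lt_one h0.le h1 (by linarith [hx n])⟩
  have hv : ∀ n, v n ∈ Set.Ioo (0:ℝ) 1 := by
    intro n
    obtain ⟨h0, h1⟩ := hq n
    exact ⟨Real.rpow_pos_of_pos h0 _,
      Real.rpow_lt_one h0.le h1 (by linarith [hxstar n])⟩
  have hhop : ∀ n, Real.log (1 - u n) ≤ Real.log (1 - v n) + γ * (x n - xstar n) := by
    intro n
    have hk := key_log_ineq (u n) (v n) (hu n) (hv n)
    have hlogvu : Real.log (v n / u n) = (xstar n - x n) * Real.log (q n) := by
      rw [Real.log_div (ne_of_gt (hv n).1) (ne_of_gt (hu n).1),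
        Real.log_rpow (hq n).1, Real.log_rpow (hq n).1]
      ring
    have hγn := hγ n
    have h1v : (1:ℝ) - v n ≠ 0 := by
      have := (hv n).2; intro h; simp only [sub_eq_zero] at h; linarith
    have : v n / (1 - v n) * Real.log (v n / u n) = γ * (x n - xstar n) := by
      rw [hlogvu, ← hγn]
      rw [show q n ^ (xstar n + 1) = v n from rfl]
      ring
    linarith [hk, this.symm.le, this.le]
  have hsumlog : ∑ n, Real.log (1 - u n) ≤ ∑ n, Real.log (1 - v n) := by
    calc ∑ n, Real.log (1 - u n)
        ≤ ∑ n, (Real.log (1 - v n) + γ * (x n - xstar n)) :=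
          Finset.sum_le_sum fun n _ => hhop n
      _ = ∑ n, Real.log (1 - v n) + γ * (∑ n, x n - ∑ n, xstar n) := by
          rw [Finset.sum_add_distrib, ← Finset.mul_sum, Finset.sum_sub_distrib]
      _ = ∑ n, Real.log (1 - v n) := by rw [hsum, hsumstar]; ring
  have hprod : ∀ (w : Fin N → ℝ), (∀ n, w n ∈ Set.Ioo (0:ℝ) 1) →
      ∏ n, (1 - w n) = Real.exp (∑ n, Real.log (1 - w n)) := by
    intro w hw
    rw [Real.exp_sum]
    exact (Finset.prod_congr rfl fun n _ => by
      rw [Real.exp_log (by linarith [(hw n).2])]).symm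
  calc ∏ n, (1 - u n) = Real.exp (∑ n, Real.log (1 - u n)) := hprod u hu
    _ ≤ Real.exp (∑ n, Real.log (1 - v n)) := Real.exp_le_exp.2 hsumlog
    _ = ∏ n, (1 - v n) := (hprod v hv).symm
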